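/- With a_n as in the decomposition φ_n = a_n q_n + b_n p_n for odd n = 2s−1 (m = s², d = 2s(n−2)), writing a_n(z,t) = Σ_{k=0}^{m−2} α_k(t) z^k, the relation α_{m−2−k}(t) = (−1)^{n+s+1} t^{d−s} α_k(t^{−1}) holds for all 0 ≤ k ≤ m−2, i.e., t^{d−s}·α_k(1/t) = (−1)^{n+s+1}·α_{m−2−k}(t) as rational function identities. -/

import Mathlib

open Polynomial Finset

/- We work in ℤ[t][z]: the outer variable `X` is z, and `C X` is t. -/

noncomputable def pOdd (s : ℕ) : Polynomial (Polynomial ℤ) :=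
  ∏ i ∈ Icc 1 s, (1 - C X * X ^ (2 * i - 1))

noncomputable def qOdd (s : ℕ) : Polynomial (Polynomial ℤ) :=
  ∏ i ∈ Icc 1 s, (X ^ (2 * i - 1) - C X)

noncomputable def rOdd (n : ℕ) : Polynomial ℤ :=
  ∏ i ∈ Icc 2 (n - 1), (1 - X ^ (2 * i))

noncomputable def phiOdd (n m : ℕ) : Polynomial (Polynomial ℤ) :=
  X ^ (m - 2) * (X ^ 2 - 1) * C (rOdd n)

namespace Stmt9Aux

noncomputable def th : ℂ := ((liouvilleNumber 3 : ℝ) : ℂ)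

lemma th_inj : ∀ P : Polynomial ℤ, aeval th P = 0 → P = 0 := by
  intro P hP
  have htr : Transcendental ℤ (liouvilleNumber 3 : ℝ) :=
    transcendental_liouvilleNumber (by norm_num)
  have : aeval th P = ((aeval (liouvilleNumber 3 : ℝ) P : ℝ) : ℂ) := by
    rw [th, ← Complex.coe_algebraMap, aeval_algebraMap_apply]
  rw [this] at hP
  have h0 : aeval (liouvilleNumber 3 : ℝ) P = 0 := by exact_mod_cast hP
  by_contra hne
  exact htr ⟨P, hne, h0⟩

lemma th_inj2 (P Q : Polynomial ℤ) (h : aeval th P = aeval th Q) : P = Q := by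
  have := th_inj (P - Q) (by rw [map_sub, h, sub_self])
  exact sub_eq_zero.mp this

lemma th_ne : th ≠ 0 := by
  intro h
  have := th_inj X (by simp [h])
  exact X_ne_zero this

lemma th_pow_ne_one {k : ℕ} (hk : k ≠ 0) : th ^ k ≠ 1 := by
  intro h
  have := th_inj (X ^ k - 1) (by simp [h])
  have h2 : (X ^ k - 1 : Polynomial ℤ) ≠ 0 := by
    simpa using X_pow_sub_C_ne_zero (Nat.pos_of_ne_zero hk) (1 : ℤ)
  exact h2 this


lemma reflect_neg' {R : Type*} [CommRing R] (f : Polynomial R) (N : ℕ) :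
    reflect N (-f) = - reflect N f := by
  ext i; simp [coeff_reflect]

lemma reflect_sub' {R : Type*} [CommRing R] (f g : Polynomial R) (N : ℕ) :
    reflect N (f - g) = reflect N f - reflect N g := by
  rw [sub_eq_add_neg, sub_eq_add_neg, reflect_add, reflect_neg']

lemma natDegree_reflect_le {R : Type*} [CommRing R] {f : Polynomial R} {N : ℕ}
    (h : f.natDegree ≤ N) : (reflect N f).natDegree ≤ N := by
  apply natDegree_le_iff_coeff_eq_zero.mpr
  intro k hk
  rw [coeff_reflect, revAt_eq_self_of_lt hk]
  exact coeff_eq_zero_of_natDegree_lt (lt_of_le_of_lt h hk)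

lemma reflect_prod {R : Type*} [CommRing R] {ι : Type*} (t : Finset ι)
    (f : ι → Polynomial R) (dg : ι → ℕ) (h : ∀ i ∈ t, (f i).natDegree ≤ dg i) :
    reflect (∑ i ∈ t, dg i) (∏ i ∈ t, f i) = ∏ i ∈ t, reflect (dg i) (f i) := by
  classical
  induction t using Finset.induction with
  | empty => simp
  | @insert x tt hx ih =>
    rw [Finset.sum_insert hx, Finset.prod_insert hx, Finset.prod_insert hx,
      reflect_mul _ _ (h x (Finset.mem_insert_self x tt))
        (le_trans (natDegree_prod_le tt f)
          (Finset.sum_le_sum (fun i hi => h i (Finset.mem_insert_of_mem hi)))),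
      ih (fun i hi => h i (Finset.mem_insert_of_mem hi))]

lemma aeval_reflect {K : Type*} [Field K] (x : K) (hx : x ≠ 0) (P : Polynomial ℤ) (N : ℕ)
    (hN : P.natDegree ≤ N) : aeval x (reflect N P) = x ^ N * aeval x⁻¹ P := by
  haveI := invertibleOfNonzero (inv_ne_zero hx)
  have h := eval₂_reflect_mul_pow (algebraMap ℤ K) x⁻¹ N P hN
  have hinv : (⅟(x⁻¹) : K) = x := by
    rw [invOf_eq_inv, inv_inv]
  rw [hinv] at h
  have hxn : (x⁻¹ : K) ^ N ≠ 0 := pow_ne_zero _ (inv_ne_zero hx)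
  rw [aeval_def, aeval_def]
  rw [← h, mul_left_comm, ← mul_pow, mul_inv_cancel₀ hx, one_pow, mul_one]


lemma descend (al be : Polynomial ℤ) (c : ℕ) (ep : ℤ) (hep : ep ≠ 0)
    (h : th ^ c * aeval th⁻¹ al = (ep : ℂ) * aeval th be) :
    ∀ t : ℚ, t ≠ 0 → t ^ c * aeval t⁻¹ al = (ep : ℚ) * aeval t be := by
  intro t ht
  by_cases hal : al = 0
  · subst hal
    simp only [map_zero, mul_zero] at h ⊢
    have hb : aeval th be = 0 := by
      rcases mul_eq_zero.mp h.symm with h' | h'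
      · exact absurd (by exact_mod_cast h') hep
      · exact h'
    rw [th_inj be hb]
    simp
  · set N := al.natDegree with hN
    have hNc : N ≤ c := by
      by_contra hlt
      push_neg at hlt
      have key : aeval th (reflect N al) = aeval th (C ep * (X ^ (N - c) * be)) := by
        rw [aeval_reflect th th_ne al N le_rfl]
        have hsplit : th ^ N = th ^ (N - c) * th ^ c := by
          rw [← pow_add]; congr 1; omega
        rw [hsplit, mul_assoc, h]
        simp [mul_comm, mul_assoc, mul_left_comm]
      have heq := th_inj2 _ _ key
      have hcoeff := congrArg (fun p => Polynomial.coeff p 0) heq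
      rw [coeff_reflect, revAt_zero] at hcoeff
      have h0 : (C ep * (X ^ (N - c) * be)).coeff 0 = 0 := by
        rw [mul_left_comm, X_pow_mul, coeff_mul_X_pow']
        simp [Nat.not_le.mpr (by omega : (0:ℕ) < N - c)]
      rw [h0] at hcoeff
      exact leadingCoeff_ne_zero.mpr hal hcoeff
    have key : aeval th (X ^ (c - N) * reflect N al) = aeval th (C ep * be) := by
      rw [map_mul, aeval_reflect th th_ne al N le_rfl, aeval_X_pow, ← mul_assoc, ← pow_add]
      have : c - N + N = c := by omega
      rw [this, h]
      simp
    have heq := th_inj2 _ _ key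
    have hq := congrArg (aeval (t : ℚ)) heq
    rw [map_mul, aeval_X_pow, aeval_reflect t ht al N le_rfl, map_mul, aeval_C] at hq
    have hsplit : (t:ℚ) ^ c = t ^ (c - N) * t ^ N := by
      rw [← pow_add]; congr 1; omega
    rw [hsplit, mul_assoc, hq]
    simp


lemma unique {K : Type*} [Field K] {P Q A1 B1 A2 B2 : Polynomial K} {M : ℕ}
    (hcop : IsCoprime P Q) (hP : M ≤ P.natDegree) (h1 : A1.natDegree < M)
    (h2 : A2.natDegree < M) (h : A1 * Q + B1 * P = A2 * Q + B2 * P) : A1 = A2 := by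
  have hdvd : P ∣ (A1 - A2) * Q := ⟨B2 - B1, by linear_combination h⟩
  have hd2 := hcop.dvd_of_dvd_mul_right hdvd
  have hz : A1 - A2 = 0 := by
    apply eq_zero_of_dvd_of_natDegree_lt hd2
    calc (A1 - A2).natDegree ≤ max A1.natDegree A2.natDegree := natDegree_sub_le _ _
      _ < M := max_lt h1 h2
      _ ≤ P.natDegree := hP
  exact sub_eq_zero.mp hz

lemma cop_pair {a b : ℕ} (ha : a ≠ 0) (hb : b ≠ 0) :
    IsCoprime ((1 : Polynomial ℂ) - C th * X ^ a) (X ^ b - C th) := by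
  classical
  by_contra hnc
  set f1 : Polynomial ℂ := 1 - C th * X ^ a
  set f2 : Polynomial ℂ := X ^ b - C th
  have hg : ¬ IsUnit (EuclideanDomain.gcd f1 f2) := fun hu =>
    hnc (EuclideanDomain.gcd_isUnit_iff.mp hu)
  have hgz : EuclideanDomain.gcd f1 f2 ≠ 0 := by
    intro h0
    have := (EuclideanDomain.gcd_eq_zero_iff.mp h0).2
    exact X_pow_sub_C_ne_zero (Nat.pos_of_ne_zero hb) th this
  have hdeg : (EuclideanDomain.gcd f1 f2).degree ≠ 0 := by
    intro h0
    exact hg (isUnit_iff_degree_eq_zero.mpr h0)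
  obtain ⟨z, hz⟩ := IsAlgClosed.exists_root (k := ℂ) (EuclideanDomain.gcd f1 f2) hdeg
  · have hr1 : f1.eval z = 0 := by
      obtain ⟨u, hu⟩ := EuclideanDomain.gcd_dvd_left f1 f2
      rw [hu, eval_mul, hz, zero_mul]
    have hr2 : f2.eval z = 0 := by
      obtain ⟨u, hu⟩ := EuclideanDomain.gcd_dvd_right f1 f2
      rw [hu, eval_mul, hz, zero_mul]
    simp only [f1, f2, eval_sub, eval_one, eval_mul, eval_C, eval_pow, eval_X] at hr1 hr2
    have h1 : th * z ^ a = 1 := by linear_combination -hr1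
    have h2 : z ^ b = th := by linear_combination hr2
    have hcontra : (1:ℂ) = th ^ (b + a) := by
      calc (1:ℂ) = (th * z ^ a) ^ b := by rw [h1, one_pow]
        _ = th ^ b * (z ^ a) ^ b := mul_pow _ _ _
        _ = th ^ b * (z ^ b) ^ a := by rw [← pow_mul, ← pow_mul, mul_comm a b]
        _ = th ^ b * th ^ a := by rw [h2]
        _ = th ^ (b + a) := (pow_add th b a).symm
    exact th_pow_ne_one (by omega) hcontra.symm


lemma sum1 (s : ℕ) : ∑ i ∈ Icc 1 s, (2 * i - 1) = s ^ 2 := by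
  induction s with
  | zero => simp
  | succ k ih =>
    rw [Finset.sum_Icc_succ_top (by omega), ih]
    have h1 : 2 * (k + 1) - 1 = 2 * k + 1 := by omega
    have h2 : k ^ 2 = k * k := sq k
    have h3 : (k + 1) ^ 2 = (k + 1) * (k + 1) := sq (k + 1)
    rw [h1, h2, h3]; ring

lemma sum2 (M : ℕ) : ∑ i ∈ Icc 2 M, 2 * i = M * M + M - 2 := by
  induction M with
  | zero => simp
  | succ k ih =>
    rcases Nat.eq_zero_or_pos k with hk | hk
    · subst hk; simp
    · rw [Finset.sum_Icc_succ_top (by omega), ih]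
      have h2 : (k + 1) * (k + 1) = k * k + 2 * k + 1 := by ring
      obtain ⟨K, hK⟩ : ∃ K, k * k = K := ⟨_, rfl⟩
      have hK1 : 1 ≤ K := hK ▸ (by simpa using Nat.mul_le_mul hk hk)
      rw [h2, hK]
      clear hK h2
      omega

lemma refl_factor_q (N : ℕ) :
    reflect N ((X : Polynomial ℂ) ^ N - C th⁻¹) = C (-th⁻¹) * (X ^ N - C th) := by
  rw [reflect_sub', reflect_monomial, revAt_le le_rfl, Nat.sub_self, pow_zero, reflect_C,
    mul_sub, ← C_mul]
  have : -th⁻¹ * th = -1 := by rw [neg_mul, inv_mul_cancel₀ th_ne]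
  rw [this]
  simp only [map_neg, C_1]
  ring

lemma refl_factor_p (N : ℕ) :
    reflect N ((1 : Polynomial ℂ) - C th⁻¹ * X ^ N) = C (-th⁻¹) * (1 - C th * X ^ N) := by
  have h1 : reflect N (1 : Polynomial ℂ) = X ^ N := by
    rw [← C_1, reflect_C, C_1, one_mul]
  rw [reflect_sub', h1, reflect_C_mul_X_pow, revAt_le le_rfl, Nat.sub_self, pow_zero, mul_one,
    mul_sub, mul_one, ← mul_assoc, ← C_mul]
  have : -th⁻¹ * th = -1 := by rw [neg_mul, inv_mul_cancel₀ th_ne]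
  rw [this]
  simp only [map_neg, C_1]
  ring

lemma deg_p_factor (c : ℂ) (N : ℕ) : ((1 : Polynomial ℂ) - C c * X ^ N).natDegree ≤ N := by
  apply le_trans (natDegree_sub_le _ _)
  simp only [natDegree_one, max_le_iff]
  exact ⟨Nat.zero_le _, le_trans (natDegree_C_mul_le _ _) (by simp)⟩

end Stmt9Aux

open Stmt9Aux

/-- Writing a_n = Σ α_k(t) z^k, the symmetry
t^(d-s) α_k(1/t) = (-1)^(n+s+1) α_{m-2-k}(t) holds. -/
theorem stmt9 (n s m d : ℕ) (hn : 3 ≤ n) (hodd : Odd n) (hs : n = 2 * s - 1)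
    (hm : m = s ^ 2) (hd : d = 2 * s * (n - 2))
    (a b : Polynomial (Polynomial ℤ))
    (ha : a.natDegree ≤ m - 2) (hb : b.natDegree ≤ m - 2)
    (hdecomp : phiOdd n m = a * qOdd s + b * pOdd s) :
    ∀ k ≤ m - 2, ∀ t : ℚ, t ≠ 0 →
      t ^ (d - s) * Polynomial.aeval t⁻¹ (a.coeff k) =
        (-1) ^ (n + s + 1) * Polynomial.aeval t (a.coeff (m - 2 - k)) := by
  classical
  have hs2 : 2 ≤ s := by omega
  have hm4 : 4 ≤ m := by
    have := Nat.mul_le_mul hs2 hs2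
    rw [hm, sq]; omega
  have hsd : s ≤ d := by
    have h1 : 1 ≤ n - 2 := by omega
    have : 2 * s * 1 ≤ 2 * s * (n - 2) := Nat.mul_le_mul_left _ h1
    omega
  set e1 : Polynomial ℤ →+* ℂ := (aeval th).toRingHom with he1
  set e2 : Polynomial ℤ →+* ℂ := (aeval th⁻¹).toRingHom with he2
  have he1X : e1 X = th := by simp [he1]
  have he2X : e2 X = th⁻¹ := by simp [he2]
  -- mapped products
  have hQ1 : (qOdd s).map e1 = ∏ i ∈ Icc 1 s, ((X : Polynomial ℂ) ^ (2 * i - 1) - C th) := by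
    rw [qOdd, ← coe_mapRingHom, map_prod]
    exact Finset.prod_congr rfl fun i _ => by simp [coe_mapRingHom, he1X]
  have hQ2 : (qOdd s).map e2 = ∏ i ∈ Icc 1 s, ((X : Polynomial ℂ) ^ (2 * i - 1) - C th⁻¹) := by
    rw [qOdd, ← coe_mapRingHom, map_prod]
    exact Finset.prod_congr rfl fun i _ => by simp [coe_mapRingHom, he2X]
  have hP1 : (pOdd s).map e1 = ∏ i ∈ Icc 1 s, ((1 : Polynomial ℂ) - C th * X ^ (2 * i - 1)) := by
    rw [pOdd, ← coe_mapRingHom, map_prod]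
    exact Finset.prod_congr rfl fun i _ => by simp [coe_mapRingHom, he1X]
  have hP2 : (pOdd s).map e2 = ∏ i ∈ Icc 1 s, ((1 : Polynomial ℂ) - C th⁻¹ * X ^ (2 * i - 1)) := by
    rw [pOdd, ← coe_mapRingHom, map_prod]
    exact Finset.prod_congr rfl fun i _ => by simp [coe_mapRingHom, he2X]
  have hXm : (X : Polynomial ℂ) ^ (m - 2) * (X ^ 2 - 1) = X ^ m - X ^ (m - 2) := by
    rw [mul_sub, mul_one, ← pow_add]
    congr 2
    omega
  have hPhi : ∀ E : Polynomial ℤ →+* ℂ,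
      (phiOdd n m).map E = C (E (rOdd n)) * (X ^ m - X ^ (m - 2)) := by
    intro E
    rw [phiOdd]
    simp only [Polynomial.map_mul, Polynomial.map_pow, Polynomial.map_sub, Polynomial.map_one,
      map_X, map_C]
    rw [hXm]; ring
  -- degree facts
  have hsum1 : ∑ i ∈ Icc 1 s, (2 * i - 1) = m := by rw [sum1, hm]
  have hQ2deg : ((qOdd s).map e2).natDegree ≤ m := by
    rw [hQ2]
    refine le_trans (natDegree_prod_le _ _) (le_of_eq ?_)
    rw [← hsum1]
    exact Finset.sum_congr rfl fun i _ => natDegree_X_pow_sub_C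
  have hP2deg : ((pOdd s).map e2).natDegree ≤ m := by
    rw [hP2]
    refine le_trans (natDegree_prod_le _ _) ?_
    rw [← hsum1]
    exact Finset.sum_le_sum fun i _ => deg_p_factor _ _
  have hA2deg : (a.map e2).natDegree ≤ m - 2 := le_trans natDegree_map_le ha
  have hB2deg : (b.map e2).natDegree ≤ m - 2 := le_trans natDegree_map_le hb
  -- mapped decompositions
  have Eq1 : (phiOdd n m).map e1
      = (a.map e1) * ((qOdd s).map e1) + (b.map e1) * ((pOdd s).map e1) := by
    rw [hdecomp]; simp only [Polynomial.map_add, Polynomial.map_mul]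
  have Eq2 : (phiOdd n m).map e2
      = (a.map e2) * ((qOdd s).map e2) + (b.map e2) * ((pOdd s).map e2) := by
    rw [hdecomp]; simp only [Polynomial.map_add, Polynomial.map_mul]
  -- reflect the e2 decomposition
  have hsplit : 2 * m - 2 = (m - 2) + m := by omega
  have hrefl : reflect (2 * m - 2) ((phiOdd n m).map e2)
      = reflect (m - 2) (a.map e2) * reflect m ((qOdd s).map e2)
        + reflect (m - 2) (b.map e2) * reflect m ((pOdd s).map e2) := by
    rw [Eq2, reflect_add, hsplit, reflect_mul _ _ hA2deg hQ2deg, reflect_mul _ _ hB2deg hP2deg]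
  -- reflect of mapped q and p
  have hRQ : reflect m ((qOdd s).map e2) = C ((-th⁻¹) ^ s) * ((qOdd s).map e1) := by
    rw [hQ2, hQ1, ← hsum1,
      reflect_prod _ _ _ (fun i _ => le_of_eq natDegree_X_pow_sub_C),
      Finset.prod_congr rfl (fun i (_ : i ∈ Icc 1 s) => refl_factor_q (2 * i - 1)),
      Finset.prod_mul_distrib, Finset.prod_const, Nat.card_Icc, Nat.add_sub_cancel, map_pow]
  have hRP : reflect m ((pOdd s).map e2) = C ((-th⁻¹) ^ s) * ((pOdd s).map e1) := by
    rw [hP2, hP1, ← hsum1,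
      reflect_prod _ _ _ (fun i _ => deg_p_factor _ _),
      Finset.prod_congr rfl (fun i (_ : i ∈ Icc 1 s) => refl_factor_p (2 * i - 1)),
      Finset.prod_mul_distrib, Finset.prod_const, Nat.card_Icc, Nat.add_sub_cancel, map_pow]
  -- rho relation
  have hsumd : ∑ i ∈ Icc 2 (n - 1), 2 * i = d := by
    rw [sum2 (n - 1), hd]
    obtain ⟨v, rfl⟩ : ∃ v, s = v + 2 := ⟨s - 2, by omega⟩
    have h1 : n - 1 = 2 * v + 2 := by omega
    have h2 : n - 2 = 2 * v + 1 := by omega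
    rw [h1, h2]
    have h3 : (2 * v + 2) * (2 * v + 2) = 4 * (v * v) + 8 * v + 4 := by ring
    have h4 : 2 * (v + 2) * (2 * v + 1) = 4 * (v * v) + 10 * v + 4 := by ring
    rw [h3, h4]
    omega
  have hrho : th ^ d * (aeval th⁻¹ (rOdd n)) = - aeval th (rOdd n) := by
    have hrev : aeval th⁻¹ (rOdd n) = ∏ i ∈ Icc 2 (n - 1), (1 - (th⁻¹) ^ (2 * i)) := by
      rw [rOdd, map_prod]; simp
    have hfwd : aeval th (rOdd n) = ∏ i ∈ Icc 2 (n - 1), (1 - th ^ (2 * i)) := by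
      rw [rOdd, map_prod]; simp
    rw [hrev, hfwd, ← hsumd, ← Finset.prod_pow_eq_pow_sum, ← Finset.prod_mul_distrib]
    have hfac : ∀ i ∈ Icc 2 (n - 1), th ^ (2 * i) * (1 - (th⁻¹) ^ (2 * i))
        = (-1) * (1 - th ^ (2 * i)) := by
      intro i _
      rw [mul_sub, mul_one, inv_pow, mul_inv_cancel₀ (pow_ne_zero _ th_ne)]
      ring
    rw [Finset.prod_congr rfl hfac, Finset.prod_mul_distrib, Finset.prod_const, Nat.card_Icc]
    have hodd2 : Odd (n - 2) := Nat.Odd.sub_even (by omega) hodd even_two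
    have hcard : n - 1 + 1 - 2 = n - 2 := by omega
    rw [hcard, hodd2.neg_one_pow]
    ring
  have hRPhi : C (th ^ d) * reflect (2 * m - 2) ((phiOdd n m).map e2) = (phiOdd n m).map e1 := by
    rw [hPhi e2, hPhi e1, mul_sub (C (e2 (rOdd n))), reflect_sub', reflect_C_mul_X_pow,
      reflect_C_mul_X_pow, revAt_le (by omega : m ≤ 2 * m - 2),
      revAt_le (by omega : m - 2 ≤ 2 * m - 2)]
    have g1 : 2 * m - 2 - m = m - 2 := by omega
    have g2 : 2 * m - 2 - (m - 2) = m := by omega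
    rw [g1, g2]
    have : e2 (rOdd n) = aeval th⁻¹ (rOdd n) := rfl
    have h1 : e1 (rOdd n) = aeval th (rOdd n) := rfl
    rw [this, h1, ← mul_sub, ← mul_assoc, ← C_mul, hrho]
    simp only [map_neg]
    ring
  -- the scalar
  have hc : th ^ d * (-th⁻¹) ^ s = (-1) ^ s * th ^ (d - s) := by
    have hdd : th ^ d = th ^ (d - s) * th ^ s := by
      rw [← pow_add]; congr 1; omega
    have hss : th ^ s * (th ^ s)⁻¹ = 1 := mul_inv_cancel₀ (pow_ne_zero _ th_ne)
    rw [hdd, neg_pow, inv_pow]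
    calc th ^ (d - s) * th ^ s * ((-1) ^ s * (th ^ s)⁻¹)
        = (-1) ^ s * th ^ (d - s) * (th ^ s * (th ^ s)⁻¹) := by ring
      _ = (-1) ^ s * th ^ (d - s) := by rw [hss, mul_one]
  -- grand identity
  have main : (phiOdd n m).map e1
      = (C ((-1) ^ s * th ^ (d - s)) * reflect (m - 2) (a.map e2)) * ((qOdd s).map e1)
        + (C ((-1) ^ s * th ^ (d - s)) * reflect (m - 2) (b.map e2)) * ((pOdd s).map e1) := by
    rw [← hRPhi, hrefl, hRQ, hRP, ← hc, C_mul]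
    ring
  -- uniqueness
  have hP1deg : m ≤ ((pOdd s).map e1).natDegree := by
    rw [hP1]
    have hfacdeg : ∀ i ∈ Icc 1 s, ((1 : Polynomial ℂ) - C th * X ^ (2 * i - 1)).natDegree
        = 2 * i - 1 := by
      intro i hi
      have hi1 : 1 ≤ i := (Finset.mem_Icc.mp hi).1
      have hcx : (C th * X ^ (2 * i - 1)).natDegree = 2 * i - 1 :=
        natDegree_C_mul_X_pow _ _ th_ne
      rw [natDegree_sub_eq_right_of_natDegree_lt (by rw [hcx]; simp; omega), hcx]
    have hne : ∀ i ∈ Icc 1 s, ((1 : Polynomial ℂ) - C th * X ^ (2 * i - 1)) ≠ 0 := by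
      intro i hi h0
      have := hfacdeg i hi
      rw [h0, natDegree_zero] at this
      have hi1 : 1 ≤ i := (Finset.mem_Icc.mp hi).1
      omega
    rw [natDegree_prod _ _ hne, Finset.sum_congr rfl hfacdeg, hsum1]
  have hcop : IsCoprime ((pOdd s).map e1) ((qOdd s).map e1) := by
    rw [hP1, hQ1]
    refine IsCoprime.prod_left fun i hi => IsCoprime.prod_right fun j hj => ?_
    have hi1 : 1 ≤ i := (Finset.mem_Icc.mp hi).1
    have hj1 : 1 ≤ j := (Finset.mem_Icc.mp hj).1
    exact cop_pair (by omega) (by omega)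
  have hA1d : (a.map e1).natDegree < m := lt_of_le_of_lt (le_trans natDegree_map_le ha) (by omega)
  have hA2d : (C ((-1) ^ s * th ^ (d - s)) * reflect (m - 2) (a.map e2)).natDegree < m :=
    lt_of_le_of_lt (le_trans (natDegree_C_mul_le _ _) (natDegree_reflect_le hA2deg)) (by omega)
  have hfinal : a.map e1 = C ((-1) ^ s * th ^ (d - s)) * reflect (m - 2) (a.map e2) :=
    unique hcop hP1deg hA1d hA2d (Eq1.symm.trans main)
  -- coefficient identity
  have hcoeff : ∀ k ≤ m - 2, aeval th (a.coeff k)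
      = (-1) ^ s * th ^ (d - s) * aeval th⁻¹ (a.coeff (m - 2 - k)) := by
    intro k hk
    have h0 := congrArg (fun p => Polynomial.coeff p k) hfinal
    simp only [coeff_map, coeff_C_mul, coeff_reflect, revAt_le hk] at h0
    exact h0
  intro k hk t ht
  have hkey : th ^ (d - s) * aeval th⁻¹ (a.coeff k)
      = (((-1 : ℤ) ^ s : ℤ) : ℂ) * aeval th (a.coeff (m - 2 - k)) := by
    have h1 := hcoeff (m - 2 - k) (by omega)
    have h2 : m - 2 - (m - 2 - k) = k := by omega
    rw [h2] at h1
    rw [h1]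
    push_cast
    have hsq : ((-1 : ℂ)) ^ s * ((-1 : ℂ)) ^ s = 1 := by
      rw [← pow_add]
      exact Even.neg_one_pow ⟨s, rfl⟩
    calc th ^ (d - s) * (aeval th⁻¹) (a.coeff k)
        = ((-1 : ℂ) ^ s * (-1 : ℂ) ^ s) * (th ^ (d - s) * (aeval th⁻¹) (a.coeff k)) := by
          rw [hsq, one_mul]
      _ = (-1 : ℂ) ^ s * ((-1 : ℂ) ^ s * th ^ (d - s) * (aeval th⁻¹) (a.coeff k)) := by ring
  have hdes := descend (a.coeff k) (a.coeff (m - 2 - k)) (d - s) ((-1) ^ s)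
    (pow_ne_zero _ (by norm_num)) hkey t ht
  rw [hdes]
  have hcast : (((-1 : ℤ) ^ s : ℤ) : ℚ) = (-1 : ℚ) ^ (n + s + 1) := by
    push_cast
    have hns : n + s + 1 = (n + 1) + s := by omega
    rw [hns, pow_add, Even.neg_one_pow hodd.add_one, one_mul]
  rw [hcast]
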